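/- arXiv:1903.10769 — 2 statements merged into one kernel-verified Lean document; each statement's English description precedes it below -/
import Mathlib

section
/- For θ > 0 and H ∈ (0,1), let μ_θ = N(0, c_H / θ^{2H}) be the centered Gaussian distribution on ℝ with variance c_H θ^{-2H}, where c_H > 0 is a fixed constant. Fix 0 < m < M < ∞ and p > 1/2, and define d_{CF,p}(μ,ν)² = ∫_ℝ (μ̂(ξ) - ν̂(ξ))² g_p(ξ) dξ with g_p(ξ) = c_p(1+ξ²)^{-p} and μ̂ the characteristic function. Then there exists a constant c = c(m,M,H,p) > 0 such that for all θ₁, θ₂ ∈ [m,M], d_{CF,p}(μ_{θ₁}, μ_{θ₂}) ≥ c |θ₁ - θ₂|. -/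
open MeasureTheory ProbabilityTheory

/-- The characteristic function of a measure on `ℝ`. -/
noncomputable def charFun1 (μ : Measure ℝ) (ξ : ℝ) : ℂ :=
  ∫ x, Complex.exp (Complex.I * ξ * x) ∂μ

/-- The characteristic-function based distance `d_{CF,p}` on probability measures on `ℝ`,
with kernel `g_p(ξ) = c_p (1+ξ²)^{-p}`. -/
noncomputable def dCF1 (p cp : ℝ) (μ ν : Measure ℝ) : ℝ :=
  Real.sqrt (∫ ξ : ℝ, ‖charFun1 μ ξ - charFun1 ν ξ‖^2 * (cp * (1 + ξ^2) ^ (-p)))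

open Real Set Filter
open scoped NNReal ENNReal

section aux

lemma int_g {p : ℝ} (hp : 1/2 < p) : Integrable (fun ξ : ℝ => (1 + ξ^2) ^ (-p)) := by
  have h1 : ((Module.finrank ℝ ℝ : ℝ)) < 2*p := by
    simp [Module.finrank_self]; linarith
  have := integrable_rpow_neg_one_add_norm_sq (E := ℝ) (μ := volume) h1
  have h2 : -(2*p)/2 = -p := by ring
  simpa [Real.norm_eq_abs, sq_abs, h2] using this

lemma charFun1_eq (v : ℝ≥0) (hv : v ≠ 0) (ξ : ℝ) :
    charFun1 (gaussianReal 0 v) ξ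
      = ((Real.sqrt (2 * π * v))⁻¹ : ℂ) *
          ∫ x : ℝ, Complex.exp (Complex.I * ξ * x) * Complex.exp (-(((2*(v:ℝ))⁻¹ : ℝ) : ℂ) * x^2) := by
  rw [charFun1, gaussianReal_of_var_ne_zero _ hv]
  rw [show gaussianPDF 0 v = fun x => ((Real.toNNReal (gaussianPDFReal 0 v x) : ℝ≥0) : ℝ≥0∞) from rfl]
  rw [integral_withDensity_eq_integral_smul ((measurable_gaussianPDFReal 0 v).real_toNNReal) _]
  rw [← integral_const_mul]
  congr 1 with x
  rw [NNReal.smul_def, Real.coe_toNNReal _ (gaussianPDFReal_nonneg 0 v x), Complex.real_smul,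
    gaussianPDFReal_def]
  push_cast
  rw [sub_zero]
  ring_nf

lemma charFun1_gaussianReal (v : ℝ≥0) (hv : v ≠ 0) (ξ : ℝ) :
    charFun1 (gaussianReal 0 v) ξ = ((Real.exp (-(v:ℝ) * ξ^2 / 2) : ℝ) : ℂ) := by
  have hv' : 0 < (v:ℝ) := by positivity
  have hvC : ((v:ℝ):ℂ) ≠ 0 := by exact_mod_cast hv'.ne'
  have hb : (0:ℝ) < ((2*(v:ℝ))⁻¹ : ℝ) := by positivity
  have hbre : (0:ℝ) < ((((2*(v:ℝ))⁻¹ : ℝ) : ℂ)).re := by simpa using hb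
  set K : ℂ := ((Real.sqrt (2 * π * v))⁻¹ : ℂ) * ((π / ((((2*(v:ℝ))⁻¹ : ℝ)) : ℂ)) ^ (1/2 : ℂ))
    with hKdef
  have key : ∀ t : ℝ, charFun1 (gaussianReal 0 v) t
      = K * Complex.exp (-((v:ℝ):ℂ) * (t:ℂ)^2 / 2) := by
    intro t
    rw [charFun1_eq v hv t, fourierIntegral_gaussian hbre (t : ℂ)]
    have harg : (-(t:ℂ)^2 / (4 * (((2*(v:ℝ))⁻¹ : ℝ) : ℂ))) = -((v:ℝ):ℂ) * (t:ℂ)^2 / 2 := by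
      push_cast
      field_simp
      ring
    rw [harg, hKdef]
    ring
  have h0 : charFun1 (gaussianReal 0 v) 0 = 1 := by
    simp [charFun1]
  have hK : K = 1 := by
    have h := key 0
    rw [h0] at h
    norm_num at h
    exact h.symm
  rw [key ξ, hK, one_mul, Complex.ofReal_exp]
  push_cast
  ring_nf

lemma charFun1_gauss_theta (cH θ twoH : ℝ) (hcH : 0 < cH) (hθ : 0 < θ) (ξ : ℝ) :
    charFun1 (gaussianReal 0 (Real.toNNReal (cH / θ ^ twoH))) ξ
      = ((Real.exp (-(cH * θ ^ (-twoH)) * (ξ^2/2)) : ℝ) : ℂ) := by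
  have hvpos : 0 < cH / θ ^ twoH := div_pos hcH (Real.rpow_pos_of_pos hθ _)
  have hvne : Real.toNNReal (cH / θ ^ twoH) ≠ 0 := (Real.toNNReal_pos.mpr hvpos).ne'
  have hvcoe : ((Real.toNNReal (cH / θ ^ twoH) : ℝ≥0) : ℝ) = cH * θ ^ (-twoH) := by
    rw [Real.coe_toNNReal _ hvpos.le, Real.rpow_neg hθ.le, div_eq_mul_inv]
  rw [charFun1_gaussianReal _ hvne ξ]
  congr 1
  rw [hvcoe]
  ring

lemma exp_diff_lower (H cH m M : ℝ) (hH : 0 < H) (hcH : 0 < cH) (hm : 0 < m) (hmM : m < M)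
    {θ₁ θ₂ : ℝ} (h1 : θ₁ ∈ Set.Icc m M) (h2 : θ₂ ∈ Set.Icc m M) (h12 : θ₁ < θ₂)
    {t : ℝ} (ht : t ∈ Set.Icc (1/2 : ℝ) 2) :
    Real.exp (-(2*cH*m^(-(2*H)))) * (H * cH * M^(-(2*H)-1)) * (θ₂ - θ₁)
      ≤ Real.exp (-(cH * θ₂^(-(2*H))) * t) - Real.exp (-(cH * θ₁^(-(2*H))) * t) := by
  set f : ℝ → ℝ := fun θ => Real.exp (-(cH * θ^(-(2*H))) * t) with hf
  set f' : ℝ → ℝ := fun θ => Real.exp (-(cH * θ^(-(2*H))) * t) * (-(cH * (-(2*H) * θ^(-(2*H)-1))) * t)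
    with hf'
  have hderiv : ∀ θ ∈ Set.Icc θ₁ θ₂, HasDerivAt f (f' θ) θ := by
    intro θ hθ
    have hθpos : 0 < θ := lt_of_lt_of_le hm (le_trans h1.1 hθ.1)
    exact ((((Real.hasDerivAt_rpow_const (p := -(2*H)) (Or.inl hθpos.ne')).const_mul
      cH).neg.mul_const t).exp)
  obtain ⟨c, hc, hceq⟩ := exists_hasDerivAt_eq_slope f f' h12
    (fun x hx => (hderiv x hx).continuousAt.continuousWithinAt)
    (fun x hx => hderiv x (Ioo_subset_Icc_self hx))
  have hcm : m ≤ c := le_trans h1.1 hc.1.le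
  have hcM : c ≤ M := le_trans hc.2.le h2.2
  have hcpos : 0 < c := lt_of_lt_of_le hm hcm
  have hfc : f' c = Real.exp (-(cH * c^(-(2*H))) * t) * (2*H*cH*c^(-(2*H)-1)*t) := by
    rw [hf']; ring
  have hE : Real.exp (-(2*cH*m^(-(2*H)))) ≤ Real.exp (-(cH * c^(-(2*H))) * t) := by
    rw [Real.exp_le_exp]
    have h1' : c^(-(2*H)) ≤ m^(-(2*H)) :=
      Real.rpow_le_rpow_of_nonpos hm hcm (by nlinarith)
    have hb : 0 ≤ cH * c^(-(2*H)) := by positivity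
    nlinarith [ht.1, ht.2, mul_le_mul_of_nonneg_left h1' hcH.le]
  have hP : H * cH * M^(-(2*H)-1) ≤ 2*H*cH*c^(-(2*H)-1)*t := by
    have h1' : M^(-(2*H)-1) ≤ c^(-(2*H)-1) :=
      Real.rpow_le_rpow_of_nonpos hcpos hcM (by nlinarith)
    have hMp : (0:ℝ) ≤ M^(-(2*H)-1) := Real.rpow_nonneg (by linarith) _
    have hmm : M^(-(2*H)-1) * (1/2) ≤ c^(-(2*H)-1) * t :=
      mul_le_mul h1' ht.1 (by norm_num) (le_trans hMp h1')
    nlinarith [mul_le_mul_of_nonneg_left hmm (by positivity : (0:ℝ) ≤ 2*H*cH)]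
  have hL : Real.exp (-(2*cH*m^(-(2*H)))) * (H * cH * M^(-(2*H)-1)) ≤ f' c := by
    rw [hfc]
    have hM0 : 0 < M := hm.trans hmM
    exact mul_le_mul hE hP (by positivity) (Real.exp_nonneg _)
  have hslope : f θ₂ - f θ₁ = f' c * (θ₂ - θ₁) := by
    rw [hceq, div_mul_cancel₀ _ (sub_ne_zero.mpr h12.ne')]
  calc Real.exp (-(2*cH*m^(-(2*H)))) * (H * cH * M^(-(2*H)-1)) * (θ₂ - θ₁)
      ≤ f' c * (θ₂ - θ₁) := by
        apply mul_le_mul_of_nonneg_right hL (by linarith)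
    _ = f θ₂ - f θ₁ := hslope.symm

lemma dCF1_comm (p cp : ℝ) (μ ν : Measure ℝ) : dCF1 p cp μ ν = dCF1 p cp ν μ := by
  unfold dCF1
  congr 1
  refine integral_congr_ae (Filter.Eventually.of_forall fun ξ => ?_)
  simp only [norm_sub_rev]

end aux

theorem stmt10 (H cH m M p cp : ℝ) (hH : H ∈ Set.Ioo (0:ℝ) 1) (hcH : 0 < cH)
    (hm : 0 < m) (hmM : m < M) (hp : 1/2 < p)
    (hcp : cp = (∫ ξ : ℝ, (1 + ξ^2) ^ (-p))⁻¹) :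
    ∃ c > 0, ∀ θ₁ ∈ Set.Icc m M, ∀ θ₂ ∈ Set.Icc m M,
      c * |θ₁ - θ₂| ≤
        dCF1 p cp (gaussianReal 0 (Real.toNNReal (cH / θ₁ ^ (2*H))))
          (gaussianReal 0 (Real.toNNReal (cH / θ₂ ^ (2*H)))) := by
  have hM0 : 0 < M := hm.trans hmM
  have hH0 : 0 < H := hH.1
  have hint := int_g hp
  have hcp0 : 0 < cp := by
    rw [hcp]
    apply inv_pos.mpr
    rw [integral_pos_iff_support_of_nonneg_ae
      (Filter.Eventually.of_forall fun ξ => Real.rpow_nonneg (by positivity) _) hint]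
    have : Function.support (fun ξ : ℝ => (1 + ξ^2) ^ (-p)) = Set.univ := by
      ext ξ
      simp only [Function.mem_support, Set.mem_univ, iff_true]
      exact (Real.rpow_pos_of_pos (by positivity) _).ne'
    rw [this]
    simp
  set c₀ : ℝ := Real.exp (-(2*cH*m^(-(2*H)))) * (H * cH * M^(-(2*H)-1)) with hc₀
  have hc₀0 : 0 < c₀ := by positivity
  set c : ℝ := c₀ * Real.sqrt (cp * (5:ℝ)^(-p)) with hcdef
  have hc0 : 0 < c := by
    apply mul_pos hc₀0
    apply Real.sqrt_pos.mpr
    positivity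
  refine ⟨c, hc0, ?_⟩
  suffices key : ∀ θ₁ ∈ Set.Icc m M, ∀ θ₂ ∈ Set.Icc m M, θ₁ < θ₂ →
      c * (θ₂ - θ₁) ≤
        dCF1 p cp (gaussianReal 0 (Real.toNNReal (cH / θ₁ ^ (2*H))))
          (gaussianReal 0 (Real.toNNReal (cH / θ₂ ^ (2*H)))) by
    intro θ₁ h₁ θ₂ h₂
    rcases lt_trichotomy θ₁ θ₂ with h | h | h
    · rw [abs_of_neg (by linarith), neg_sub]
      exact key θ₁ h₁ θ₂ h₂ h
    · subst h
      simp only [sub_self, abs_zero, mul_zero]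
      exact Real.sqrt_nonneg _
    · rw [abs_of_pos (by linarith), dCF1_comm]
      exact key θ₂ h₂ θ₁ h₁ h
  intro θ₁ h₁ θ₂ h₂ hlt
  have hθ₁0 : 0 < θ₁ := lt_of_lt_of_le hm h₁.1
  have hθ₂0 : 0 < θ₂ := lt_of_lt_of_le hm h₂.1
  set E : ℝ → ℝ → ℝ := fun θ ξ => Real.exp (-(cH * θ^(-(2*H))) * (ξ^2/2)) with hE
  set G : ℝ → ℝ := fun ξ => (E θ₁ ξ - E θ₂ ξ)^2 * (cp * (1+ξ^2)^(-p)) with hG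
  have hGval : dCF1 p cp (gaussianReal 0 (Real.toNNReal (cH / θ₁ ^ (2*H))))
      (gaussianReal 0 (Real.toNNReal (cH / θ₂ ^ (2*H)))) = Real.sqrt (∫ ξ, G ξ) := by
    unfold dCF1
    refine congrArg Real.sqrt (integral_congr_ae (Filter.Eventually.of_forall fun ξ => ?_))
    simp only [hG, hE]
    rw [charFun1_gauss_theta cH θ₁ (2*H) hcH hθ₁0 ξ, charFun1_gauss_theta cH θ₂ (2*H) hcH hθ₂0 ξ,
      ← Complex.ofReal_sub, Complex.norm_real, Real.norm_eq_abs, sq_abs]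
  have hGnn : ∀ ξ, 0 ≤ G ξ := fun ξ => by positivity
  have hGcont : Continuous G := by
    have hbase : Continuous fun ξ : ℝ => (1 + ξ^2 : ℝ) := continuous_const.add (continuous_pow 2)
    have hker : Continuous fun ξ : ℝ => ((1 + ξ^2 : ℝ))^(-p) :=
      hbase.rpow_const (fun x => Or.inl (by positivity))
    have hEc : ∀ θ : ℝ, Continuous (E θ) := by
      intro θ
      simp only [hE]
      fun_prop
    exact (((hEc θ₁).sub (hEc θ₂)).pow 2).mul (continuous_const.mul hker)
  have hGint : Integrable G := by
    refine (hint.const_mul cp).mono' hGcont.aestronglyMeasurable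
      (Filter.Eventually.of_forall fun ξ => ?_)
    rw [Real.norm_eq_abs, abs_of_nonneg (hGnn ξ)]
    simp only [hG]
    have harg1 : (0:ℝ) ≤ (cH * θ₁^(-(2*H))) * (ξ^2/2) := by positivity
    have harg2 : (0:ℝ) ≤ (cH * θ₂^(-(2*H))) * (ξ^2/2) := by positivity
    have he1 : E θ₁ ξ ≤ 1 := Real.exp_le_one_iff.mpr (by linarith)
    have he2 : E θ₂ ξ ≤ 1 := Real.exp_le_one_iff.mpr (by linarith)
    have he1' : 0 < E θ₁ ξ := Real.exp_pos _
    have he2' : 0 < E θ₂ ξ := Real.exp_pos _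
    have hsq : (E θ₁ ξ - E θ₂ ξ)^2 ≤ 1 := by nlinarith
    have hg0 : 0 ≤ cp * (1+ξ^2)^(-p) := by positivity
    nlinarith [mul_le_mul_of_nonneg_right hsq hg0]
  have hpt : ∀ ξ ∈ Set.Icc (1:ℝ) 2,
      (c₀*(θ₂-θ₁))^2 * (cp * (5:ℝ)^(-p)) ≤ G ξ := by
    intro ξ hξ
    have ht : ξ^2/2 ∈ Set.Icc (1/2 : ℝ) 2 := by
      constructor
      · nlinarith [hξ.1, hξ.2]
      · nlinarith [hξ.1, hξ.2]
    have hdiff := exp_diff_lower H cH m M hH0 hcH hm hmM h₁ h₂ hlt ht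
    have hd0 : 0 ≤ c₀ * (θ₂ - θ₁) := mul_nonneg hc₀0.le (by linarith)
    have hsq : (c₀*(θ₂-θ₁))^2 ≤ (E θ₁ ξ - E θ₂ ξ)^2 := by
      rw [show (E θ₁ ξ - E θ₂ ξ)^2 = (E θ₂ ξ - E θ₁ ξ)^2 by ring]
      exact pow_le_pow_left₀ hd0 hdiff 2
    have hker : (5:ℝ)^(-p) ≤ (1+ξ^2)^(-p) := by
      apply Real.rpow_le_rpow_of_nonpos (by positivity) (by nlinarith [hξ.1, hξ.2]) (by linarith)
    have hker' : cp * (5:ℝ)^(-p) ≤ cp * (1+ξ^2)^(-p) :=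
      mul_le_mul_of_nonneg_left hker hcp0.le
    simp only [hG]
    exact mul_le_mul hsq hker' (by positivity) (by positivity)
  have hlow : (c₀*(θ₂-θ₁))^2 * (cp * (5:ℝ)^(-p)) ≤ ∫ ξ in Set.Icc (1:ℝ) 2, G ξ := by
    have hvol : volume (Set.Icc (1:ℝ) 2) ≠ ⊤ := by
      rw [Real.volume_Icc]; simp
    have := setIntegral_ge_of_const_le_real measurableSet_Icc hvol hpt hGint.integrableOn
    rw [Real.volume_real_Icc] at this
    norm_num at this
    exact this
  have hset : ∫ ξ in Set.Icc (1:ℝ) 2, G ξ ≤ ∫ ξ, G ξ :=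
    setIntegral_le_integral hGint (Filter.Eventually.of_forall hGnn)
  rw [hGval]
  rw [Real.le_sqrt (mul_nonneg hc0.le (by linarith))
    (le_trans (le_trans (by positivity) hlow) hset)]
  have hexp : (c * (θ₂ - θ₁))^2 = (c₀*(θ₂-θ₁))^2 * (cp * (5:ℝ)^(-p)) := by
    rw [hcdef, mul_pow, mul_pow, Real.sq_sqrt (by positivity)]
    ring
  rw [hexp]
  exact hlow.trans hset
end

section
/- Let d = 2 and for θ ∈ [m, M] ⊂ (0,∞) and ε ∈ ℝ define b_θ : ℝ² → ℝ² by b_θ(z) = -θ z ψ((1+|z|²)^{1/2}) + ε z^⊥, where z^⊥ = (-z₂, z₁) and ψ(x) = e^x/(1+e^x) is the sigmoid function. Then for all z, w ∈ ℝ² and θ ∈ [m,M], ⟨b_θ(z) - b_θ(w), z - w⟩ ≤ -(m/2)|z - w|². -/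
/-- The sigmoid function. -/
noncomputable def sigmoid (x : ℝ) : ℝ := Real.exp x / (1 + Real.exp x)

/-- Rotation by 90 degrees in `ℝ²`: `z^⊥ = (-z₂, z₁)`. -/
noncomputable def perp (z : EuclideanSpace ℝ (Fin 2)) : EuclideanSpace ℝ (Fin 2) :=
  (WithLp.equiv 2 (Fin 2 → ℝ)).symm ![-(z 1), z 0]

/-- The drift `b_θ(z) = -θ z ψ((1+|z|²)^{1/2}) + ε z^⊥`. -/
noncomputable def drift2d (θ ε : ℝ) (z : EuclideanSpace ℝ (Fin 2)) :
    EuclideanSpace ℝ (Fin 2) :=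
  (-(θ * sigmoid (Real.sqrt (1 + ‖z‖^2)))) • z + ε • perp z

lemma sigmoid_mono : Monotone sigmoid := by
  intro x y hxy
  unfold sigmoid
  have hx := Real.exp_pos x
  have hy := Real.exp_pos y
  rw [div_le_div_iff₀ (by linarith) (by linarith)]
  have : Real.exp x ≤ Real.exp y := Real.exp_le_exp.2 hxy
  nlinarith

lemma half_le_sigmoid {x : ℝ} (hx : 0 ≤ x) : 1/2 ≤ sigmoid x := by
  unfold sigmoid
  have h1 : (1:ℝ) ≤ Real.exp x := Real.one_le_exp hx
  rw [le_div_iff₀ (by linarith)]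
  linarith

/-- Strong monotonicity of a radial map with nondecreasing, bounded-below profile. -/
lemma radial_strong_mono (φ : ℝ → ℝ) (c : ℝ)
    (hmono : ∀ x y : ℝ, 0 ≤ x → x ≤ y → φ x ≤ φ y)
    (hlb : ∀ x : ℝ, 0 ≤ x → c ≤ φ x)
    (z w : EuclideanSpace ℝ (Fin 2)) :
    c * ‖z - w‖^2 ≤ (inner ℝ (φ ‖z‖ • z - φ ‖w‖ • w) (z - w) : ℝ) := by
  set a := ‖z‖ with ha'
  set b := ‖w‖ with hb'
  have ha : 0 ≤ a := norm_nonneg z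
  have hb : 0 ≤ b := norm_nonneg w
  set t : ℝ := inner ℝ z w with ht'
  have ht : t ≤ a * b := real_inner_le_norm z w
  have h2 : c ≤ φ a := hlb a ha
  have h3 : c ≤ φ b := hlb b hb
  have expand : (inner ℝ (φ a • z - φ b • w) (z - w) : ℝ)
      = φ a * a^2 + φ b * b^2 - (φ a + φ b) * t := by
    have hwz : (inner ℝ w z : ℝ) = t := by rw [real_inner_comm, ← ht']
    simp only [inner_sub_left, inner_sub_right, real_inner_smul_left,
      real_inner_self_eq_norm_sq, ← ht', ← ha', ← hb']
    rw [hwz]; ring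
  have hnorm : ‖z - w‖^2 = a^2 + b^2 - 2*t := by
    rw [@norm_sub_sq_real]; ring
  rw [expand, hnorm]
  rcases le_total a b with hab | hab
  · have h1 : φ a ≤ φ b := hmono a b ha hab
    have key : (φ a - c) * a ≤ (φ b - c) * b := by nlinarith
    nlinarith [mul_nonneg (sub_nonneg.2 hab) (sub_nonneg.2 key),
      mul_nonneg (by linarith : (0:ℝ) ≤ φ a + φ b - 2*c) (by linarith : (0:ℝ) ≤ a*b - t)]
  · have h1 : φ b ≤ φ a := hmono b a hb hab
    have key : (φ b - c) * b ≤ (φ a - c) * a := by nlinarith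
    nlinarith [mul_nonneg (sub_nonneg.2 hab) (sub_nonneg.2 key),
      mul_nonneg (by linarith : (0:ℝ) ≤ φ a + φ b - 2*c) (by linarith : (0:ℝ) ≤ a*b - t)]

lemma inner_perp_sub (z w : EuclideanSpace ℝ (Fin 2)) :
    (inner ℝ (perp z - perp w) (z - w) : ℝ) = 0 := by
  have h : ∀ u : EuclideanSpace ℝ (Fin 2), ∀ i : Fin 2,
      perp u i = ![-(u 1), u 0] i := fun u i => rfl
  simp only [inner_sub_left, inner_sub_right, PiLp.inner_apply, RCLike.inner_apply,
    starRingEnd_apply, star_trivial, Fin.sum_univ_two]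
  simp only [h]
  simp [Matrix.cons_val_zero, Matrix.cons_val_one]
  ring

theorem stmt17 (m M ε : ℝ) (hm : 0 < m) (hmM : m ≤ M) :
    ∀ θ ∈ Set.Icc m M, ∀ z w : EuclideanSpace ℝ (Fin 2),
      (inner ℝ (drift2d θ ε z - drift2d θ ε w) (z - w) : ℝ) ≤ -(m/2) * ‖z - w‖^2 := by
  intro θ hθ z w
  obtain ⟨hθm, hθM⟩ := hθ
  set φ : ℝ → ℝ := fun r => θ * sigmoid (Real.sqrt (1 + r^2)) with hφ
  have hmono : ∀ x y : ℝ, 0 ≤ x → x ≤ y → φ x ≤ φ y := by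
    intro x y hx hxy
    have : Real.sqrt (1 + x^2) ≤ Real.sqrt (1 + y^2) := by
      apply Real.sqrt_le_sqrt; nlinarith
    exact mul_le_mul_of_nonneg_left (sigmoid_mono this) (by linarith)
  have hlb : ∀ x : ℝ, 0 ≤ x → m/2 ≤ φ x := by
    intro x hx
    have h1 : (1:ℝ)/2 ≤ sigmoid (Real.sqrt (1 + x^2)) :=
      half_le_sigmoid (Real.sqrt_nonneg _)
    have hθpos : 0 < θ := lt_of_lt_of_le hm hθm
    calc m/2 ≤ θ * (1/2) := by linarith
    _ ≤ θ * sigmoid (Real.sqrt (1 + x^2)) := by nlinarith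
  have hdiff : drift2d θ ε z - drift2d θ ε w
      = -(φ ‖z‖ • z - φ ‖w‖ • w) + ε • (perp z - perp w) := by
    simp only [drift2d, hφ, neg_smul, smul_sub]
    abel
  have hkey := radial_strong_mono φ (m/2) hmono hlb z w
  rw [hdiff]
  rw [inner_add_left, inner_neg_left, real_inner_smul_left, inner_perp_sub]
  linarith
end
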